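/- For every nonempty area sequence w of size n with bounce sequence b_1 … b_n, the number of positions of ψ(w) carrying the maximum value of ψ(w) equals b_n + 1; that is, |Maxb(ψ(w))| = b_n + 1. -/

import Mathlib

/-- The `i`-th letter of the word `w` (`1`-indexed, as in the paper);
defaults to `0` out of range. -/
def get1 (w : List ℕ) (i : ℕ) : ℕ := w.getD (i - 1) 0

/-- `w` is the area sequence of a Dyck path: the first letter is `0` and each
letter exceeds the previous one by at most one. -/
def IsAreaSeq (w : List ℕ) : Prop :=
  (w ≠ [] → get1 w 1 = 0) ∧ ∀ i, 1 ≤ i → i < w.length → get1 w (i + 1) ≤ get1 w i + 1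

/-- Insertion at position `i` (for `0 ≤ i ≤ n`): `ins w 0` prepends a `0`, and
for `1 ≤ i ≤ n`, `ins w i` inserts the letter `w_i + 1` just after position `i`. -/
def ins (w : List ℕ) (i : ℕ) : List ℕ :=
  w.take i ++ (if i = 0 then 0 else get1 w i + 1) :: w.drop i

/-- The area statistic: the sum of the letters. -/
def area (w : List ℕ) : ℕ := w.sum

/-- The dinv statistic: `dinv w = Σ_i d_i` where `d_i` is the number of `j > i`
with `w_j = w_i` or `w_j = w_i - 1`. -/
def dinv (w : List ℕ) : ℕ :=
  ∑ i ∈ Finset.Icc 1 w.length,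
    ((Finset.Ioc i w.length).filter
      (fun j => get1 w j = get1 w i ∨ get1 w j + 1 = get1 w i)).card

/-- The maximal value of a word (`0` for the empty word). -/
def maxVal (w : List ℕ) : ℕ := w.foldr max 0

/-- Positions of the letters of maximal value `m`. -/
def Maxb (w : List ℕ) : Finset ℕ :=
  (Finset.Icc 1 w.length).filter (fun i => get1 w i = maxVal w)

/-- Positions `i` with `w_i = m - 1` such that all letters after position `i`
are `< m`. -/
def Maxa (w : List ℕ) : Finset ℕ :=
  (Finset.Icc 1 w.length).filter (fun i =>
    get1 w i + 1 = maxVal w ∧ ∀ j ∈ Finset.Ioc i w.length, get1 w j < maxVal w)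

/-- The position of the leftmost letter equal to the maximal value `m` in the
rightmost block of consecutive letters equal to `m`. -/
def i0 (w : List ℕ) : ℕ :=
  ((Finset.Icc 1 w.length).filter (fun i =>
    get1 w i = maxVal w ∧ (i = 1 ∨ get1 w (i - 1) ≠ maxVal w))).sup id

/-- The admissible insertion positions of `w`, listed in admissible order:
the elements of `Maxb w` in decreasing order, then the elements of `Maxa w`
in decreasing order, then `i0 w - 1`.  The empty word has the single
admissible insertion position `0`. -/
def admissible (w : List ℕ) : List ℕ :=
  if w = [] then [0]
  else ((Maxb w).sort (· ≤ ·)).reverse ++ ((Maxa w).sort (· ≤ ·)).reverse ++ [i0 w - 1]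

/-- Auxiliary version of the map `ψ`, reading the reversed word. -/
def psiRev : List ℕ → List ℕ
  | [] => []
  | a :: u => ins (psiRev u) ((admissible (psiRev u)).getD a 0)

/-- The map `ψ`: `ψ(ε) = ε` and `ψ(u a) = ins_{c_a}(ψ(u))` where
`c_0, c_1, …, c_k` are the admissible insertion positions of `ψ(u)` in
admissible order. -/
def psi (w : List ℕ) : List ℕ := psiRev w.reverse

/-- The bounce sequence: `b_1 = 0`, and `b_i = b_{i-1} + 1` if
`b_{i-1} + 1 ≤ w_i`, otherwise `b_i = 0`. -/
def bseq (w : List ℕ) : ℕ → ℕ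
  | 0 => 0
  | 1 => 0
  | (i + 2) => if bseq w (i + 1) + 1 ≤ get1 w (i + 2) then bseq w (i + 1) + 1 else 0

/-- The bounces of `w`: positions `1 < i ≤ n` with `b_i = 0`. -/
def bounces (w : List ℕ) : Finset ℕ :=
  (Finset.Icc 2 w.length).filter (fun i => bseq w i = 0)

/-- The bounce statistic: the sum of the reversed positions `n - i + 1` of the
bounces of `w`. -/
def bounce (w : List ℕ) : ℕ := ∑ i ∈ bounces w, (w.length - i + 1)

set_option linter.unusedVariables false

lemma get1_eq_getElem (w : List ℕ) (i : ℕ) (h1 : 1 ≤ i) (h2 : i ≤ w.length) :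
    get1 w i = w[i-1]'(by omega) := by
  simp [get1, List.getD_eq_getElem?_getD, List.getElem?_eq_getElem (by omega : i - 1 < w.length)]

lemma get1_mem (w : List ℕ) (i : ℕ) (h1 : 1 ≤ i) (h2 : i ≤ w.length) : get1 w i ∈ w := by
  rw [get1_eq_getElem w i h1 h2]; exact List.getElem_mem _

lemma length_ins (v : List ℕ) (c : ℕ) (hc : c ≤ v.length) :
    (ins v c).length = v.length + 1 := by
  simp [ins]; omega

lemma ins_perm (v : List ℕ) (c : ℕ) :
    (ins v c).Perm ((if c = 0 then 0 else get1 v c + 1) :: v) := by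
  unfold ins
  have := List.perm_middle (a := if c = 0 then 0 else get1 v c + 1)
    (l₁ := v.take c) (l₂ := v.drop c)
  rwa [List.take_append_drop] at this

lemma get1_ins_of_le (v : List ℕ) (c j : ℕ) (hc : c ≤ v.length) (hj : 1 ≤ j) (hjc : j ≤ c) :
    get1 (ins v c) j = get1 v j := by
  have h1 : j - 1 < (v.take c).length := by simp; omega
  have h2 : j - 1 < v.length := by omega
  rw [get1_eq_getElem _ j hj (by rw [length_ins v c hc]; omega),
      get1_eq_getElem v j hj (by omega)]
  simp only [ins]
  rw [List.getElem_append_left h1, List.getElem_take]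

lemma get1_ins_self (v : List ℕ) (c : ℕ) (hc : c ≤ v.length) :
    get1 (ins v c) (c + 1) = if c = 0 then 0 else get1 v c + 1 := by
  rw [get1_eq_getElem _ (c+1) (by omega) (by rw [length_ins v c hc]; omega)]
  simp only [ins]
  have h1 : (v.take c).length = c := by simp; omega
  rw [List.getElem_append_right (by omega : (v.take c).length ≤ c + 1 - 1)]
  simp [h1]

lemma get1_ins_of_gt (v : List ℕ) (c j : ℕ) (hc : c ≤ v.length) (hj : c + 2 ≤ j)
    (hj2 : j ≤ v.length + 1) :
    get1 (ins v c) j = get1 v (j - 1) := by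
  rw [get1_eq_getElem _ j (by omega) (by rw [length_ins v c hc]; omega),
      get1_eq_getElem v (j-1) (by omega) (by omega)]
  simp only [ins]
  have h1 : (v.take c).length = c := by simp; omega
  rw [List.getElem_append_right (by simp; omega : (v.take c).length ≤ j - 1)]
  have h2 : j - 1 - (v.take c).length = (j - 1 - c - 1) + 1 := by omega
  simp only [h2, List.getElem_cons_succ, List.getElem_drop]
  congr 1
  omega

lemma maxVal_cons (a : ℕ) (w : List ℕ) : maxVal (a :: w) = max a (maxVal w) := rfl

lemma le_maxVal_of_mem {w : List ℕ} {a : ℕ} (h : a ∈ w) : a ≤ maxVal w := by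
  induction w with
  | nil => simp at h
  | cons x xs ih =>
    rw [maxVal_cons]
    rcases List.mem_cons.mp h with h | h
    · omega
    · have := ih h; omega

lemma maxVal_mem {w : List ℕ} (h : w ≠ []) : maxVal w ∈ w := by
  induction w with
  | nil => simp at h
  | cons x xs ih =>
    rw [maxVal_cons]
    rcases xs with _ | ⟨y, ys⟩
    · simp [maxVal]
    · rcases Nat.le_total x (maxVal (y :: ys)) with h' | h'
      · rw [max_eq_right h']; exact List.mem_cons_of_mem _ (ih (by simp))
      · rw [max_eq_left h']; exact List.mem_cons_self

lemma maxVal_perm {w w' : List ℕ} (h : w.Perm w') : maxVal w = maxVal w' := by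
  rcases List.eq_nil_or_concat w with rfl | _
  · rw [h.nil_eq]
  · have hne : w ≠ [] := by rintro rfl; simp_all
    have hne' : w' ≠ [] := by rintro rfl; exact hne h.eq_nil
    exact le_antisymm (le_maxVal_of_mem (h.mem_iff.mp (maxVal_mem hne)))
      (le_maxVal_of_mem (h.mem_iff.mpr (maxVal_mem hne')))

lemma get1_le_maxVal (w : List ℕ) (i : ℕ) (h1 : 1 ≤ i) (h2 : i ≤ w.length) :
    get1 w i ≤ maxVal w := le_maxVal_of_mem (get1_mem w i h1 h2)

lemma get1_append (u : List ℕ) (a : ℕ) (i : ℕ) (h1 : 1 ≤ i) (h2 : i ≤ u.length) :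
    get1 (u ++ [a]) i = get1 u i := by
  rw [get1_eq_getElem _ i h1 (by simp; omega), get1_eq_getElem u i h1 h2]
  rw [List.getElem_append_left (by omega)]

lemma get1_append_last (u : List ℕ) (a : ℕ) : get1 (u ++ [a]) (u.length + 1) = a := by
  rw [get1_eq_getElem _ _ (by omega) (by simp)]
  rw [List.getElem_append_right (by omega)]
  simp

lemma card_filter_get1 (w : List ℕ) (x : ℕ) :
    ((Finset.Icc 1 w.length).filter (fun i => get1 w i = x)).card = w.count x := by
  induction w using List.reverseRecOn with
  | nil => simp
  | append_singleton u a ih =>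
    have hlen : (u ++ [a]).length = u.length + 1 := by simp
    have hsplit : Finset.Icc 1 (u.length + 1) = insert (u.length + 1) (Finset.Icc 1 u.length) := by
      ext i; simp [Finset.mem_Icc, Finset.mem_insert]; omega
    rw [hlen, hsplit, Finset.filter_insert]
    have hfe : (Finset.Icc 1 u.length).filter (fun i => get1 (u ++ [a]) i = x)
        = (Finset.Icc 1 u.length).filter (fun i => get1 u i = x) := by
      apply Finset.filter_congr
      intro i hi
      simp only [Finset.mem_Icc] at hi
      rw [get1_append u a i hi.1 hi.2]
    have hc : (u ++ [a]).count x = u.count x + if a = x then 1 else 0 := by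
      by_cases h : a = x
      · simp [List.count_append, List.count_singleton, h]
      · simp [List.count_append, List.count_singleton, h]
    rw [get1_append_last u a, hc, hfe]
    by_cases h : a = x
    · rw [if_pos h, Finset.card_insert_of_notMem (by simp), ih, if_pos h]
    · rw [if_neg h, ih, if_neg h, Nat.add_zero]

lemma Maxb_card_count (w : List ℕ) : (Maxb w).card = w.count (maxVal w) :=
  card_filter_get1 w (maxVal w)

lemma count_maxVal_succ (w : List ℕ) (x : ℕ) (hx : maxVal w < x) : w.count x = 0 := by
  rw [List.count_eq_zero]
  intro hmem
  exact absurd (le_maxVal_of_mem hmem) (by omega)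

lemma Maxb_nonempty {w : List ℕ} (h : w ≠ []) : (Maxb w).Nonempty := by
  obtain ⟨i, hi, hget⟩ := List.mem_iff_getElem.mp (maxVal_mem h)
  refine ⟨i + 1, Finset.mem_filter.mpr ⟨Finset.mem_Icc.mpr (by omega), ?_⟩⟩
  rw [get1_eq_getElem _ _ (by omega) (by omega)]
  simpa using hget

/-- position of last occurrence of the max -/
noncomputable def lastMax (w : List ℕ) : ℕ :=
  if h : w = [] then 0 else (Maxb w).max' (Maxb_nonempty h)

lemma lastMax_mem {v : List ℕ} (hne : v ≠ []) : lastMax v ∈ Maxb v := by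
  rw [lastMax, dif_neg hne]; exact (Maxb v).max'_mem _

lemma lastMax_get1 {v : List ℕ} (hne : v ≠ []) : get1 v (lastMax v) = maxVal v :=
  (Finset.mem_filter.mp (lastMax_mem hne)).2

lemma lastMax_bounds {v : List ℕ} (hne : v ≠ []) : 1 ≤ lastMax v ∧ lastMax v ≤ v.length :=
  Finset.mem_Icc.mp (Finset.mem_filter.mp (lastMax_mem hne)).1

lemma le_lastMax {v : List ℕ} (hne : v ≠ []) {j : ℕ} (hj : j ∈ Maxb v) : j ≤ lastMax v := by
  rw [lastMax, dif_neg hne]; exact Finset.le_max' _ j hj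

lemma get1_ne_of_gt_lastMax {v : List ℕ} (hne : v ≠ []) {j : ℕ}
    (h1 : lastMax v < j) (h2 : j ≤ v.length) : get1 v j ≠ maxVal v := by
  intro hj
  have h1' : 1 ≤ j := by have := (lastMax_bounds hne).1; omega
  have hmem : j ∈ Maxb v := Finset.mem_filter.mpr ⟨Finset.mem_Icc.mpr ⟨h1', h2⟩, hj⟩
  have := le_lastMax hne hmem
  omega

lemma Maxa_eq_empty {v : List ℕ} (hm : maxVal v = 0) : Maxa v = ∅ := by
  rw [Maxa, Finset.filter_eq_empty_iff]
  intro i _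
  rw [hm]
  rintro ⟨h, -⟩
  omega

lemma Maxa_char {v : List ℕ} (hne : v ≠ []) (hm : 1 ≤ maxVal v) :
    Maxa v = (Finset.Ioc (lastMax v) v.length).filter (fun i => get1 v i = maxVal v - 1) := by
  ext i
  simp only [Maxa, Finset.mem_filter, Finset.mem_Icc, Finset.mem_Ioc]
  constructor
  · rintro ⟨⟨hi1, hi2⟩, heq, hall⟩
    have hPi : lastMax v < i := by
      rcases Nat.lt_trichotomy (lastMax v) i with h | h | h
      · exact h
      · exfalso; have hq := lastMax_get1 hne; rw [h] at hq; omega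
      · exfalso
        have := hall (lastMax v) ⟨h, (lastMax_bounds hne).2⟩
        have hq := lastMax_get1 hne; omega
    exact ⟨⟨hPi, hi2⟩, by omega⟩
  · rintro ⟨⟨hPi, hi2⟩, heq⟩
    have hi1 : 1 ≤ i := by have := (lastMax_bounds hne).1; omega
    refine ⟨⟨hi1, hi2⟩, by omega, ?_⟩
    intro j hj
    have hne' := get1_ne_of_gt_lastMax hne (by omega : lastMax v < j) hj.2
    have hle := get1_le_maxVal v j (by omega) hj.2
    omega

lemma sup_id_mem {s : Finset ℕ} (h : s.Nonempty) : s.sup id ∈ s := by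
  have : s.sup id = s.max' h := by
    rw [Finset.max'_eq_sup', Finset.sup'_eq_sup]
  rw [this]; exact s.max'_mem h

lemma le_sup_id {s : Finset ℕ} {a : ℕ} (ha : a ∈ s) : a ≤ s.sup id :=
  Finset.le_sup (f := id) ha

section I0
variable {v : List ℕ}

lemma i0_set_nonempty (hv : IsAreaSeq v) (hne : v ≠ []) (hm : 1 ≤ maxVal v) :
    ((Finset.Icc 1 v.length).filter (fun i =>
      get1 v i = maxVal v ∧ (i = 1 ∨ get1 v (i - 1) ≠ maxVal v))).Nonempty := by
  have h1 : get1 v 1 = 0 := hv.1 hne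
  have hP := lastMax_bounds hne
  -- B: positions ≤ lastMax with value ≠ m
  set B := (Finset.Icc 1 (lastMax v)).filter (fun i => get1 v i ≠ maxVal v) with hB
  have hBne : B.Nonempty := by
    refine ⟨1, Finset.mem_filter.mpr ⟨Finset.mem_Icc.mpr ⟨le_refl 1, hP.1⟩, ?_⟩⟩
    rw [h1]; omega
  set q := B.max' hBne with hq
  have hqmem := Finset.mem_filter.mp (B.max'_mem hBne)
  have hqIcc := Finset.mem_Icc.mp hqmem.1
  have hqP : q < lastMax v := by
    rcases Nat.lt_or_ge q (lastMax v) with h | h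
    · exact h
    · exfalso
      have heq : q = lastMax v := by omega
      have h2 := hqmem.2
      rw [hq] at heq
      rw [heq, lastMax_get1 hne] at h2
      exact h2 rfl
  have hq1 : get1 v (q + 1) = maxVal v := by
    by_contra hcon
    have : q + 1 ∈ B := Finset.mem_filter.mpr
      ⟨Finset.mem_Icc.mpr ⟨by omega, by omega⟩, hcon⟩
    have := Finset.le_max' B _ this
    omega
  refine ⟨q + 1, Finset.mem_filter.mpr ⟨Finset.mem_Icc.mpr ⟨by omega, by omega⟩, hq1, ?_⟩⟩
  right
  simpa using hqmem.2

lemma i0_mem (hv : IsAreaSeq v) (hne : v ≠ []) (hm : 1 ≤ maxVal v) :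
    i0 v ∈ (Finset.Icc 1 v.length).filter (fun i =>
      get1 v i = maxVal v ∧ (i = 1 ∨ get1 v (i - 1) ≠ maxVal v)) :=
  sup_id_mem (i0_set_nonempty hv hne hm)

lemma i0_facts (hv : IsAreaSeq v) (hne : v ≠ []) (hm : 1 ≤ maxVal v) :
    2 ≤ i0 v ∧ i0 v ≤ v.length ∧ get1 v (i0 v) = maxVal v ∧
      get1 v (i0 v - 1) = maxVal v - 1 ∧ i0 v ≤ lastMax v := by
  have hmem := Finset.mem_filter.mp (i0_mem hv hne hm)
  have hIcc := Finset.mem_Icc.mp hmem.1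
  obtain ⟨hval, hor⟩ := hmem.2
  have h1 : get1 v 1 = 0 := hv.1 hne
  have h2 : 2 ≤ i0 v := by
    rcases Nat.lt_or_ge (i0 v) 2 with h | h
    · exfalso
      have : i0 v = 1 := by omega
      rw [this, h1] at hval; omega
    · exact h
  have hprev : get1 v (i0 v - 1) ≠ maxVal v := by
    rcases hor with h | h
    · omega
    · exact h
  have harea := hv.2 (i0 v - 1) (by omega) (by omega)
  have : i0 v - 1 + 1 = i0 v := by omega
  rw [this] at harea
  have hle := get1_le_maxVal v (i0 v - 1) (by omega) (by omega)
  have hle2 : i0 v ≤ lastMax v := le_lastMax hne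
    (Finset.mem_filter.mpr ⟨hmem.1, hval⟩)
  exact ⟨h2, hIcc.2, hval, by omega, hle2⟩

lemma i0_eq_one (hne : v ≠ []) (hm : maxVal v = 0) : i0 v = 1 := by
  have hset : (Finset.Icc 1 v.length).filter (fun i =>
      get1 v i = maxVal v ∧ (i = 1 ∨ get1 v (i - 1) ≠ maxVal v)) = {1} := by
    ext i
    simp only [Finset.mem_filter, Finset.mem_Icc, Finset.mem_singleton]
    constructor
    · rintro ⟨⟨hi1, hi2⟩, -, h | h⟩
      · exact h
      · by_contra hne1
        have hi2' : 2 ≤ i := by omega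
        have hle := get1_le_maxVal v (i-1) (by omega) (by omega)
        rw [hm] at hle
        exact h (by omega)
    · rintro rfl
      refine ⟨⟨le_refl 1, ?_⟩, ?_, Or.inl rfl⟩
      · have : 0 < v.length := List.length_pos_iff.mpr hne; omega
      · rw [hm]
        have : 0 < v.length := List.length_pos_iff.mpr hne
        have := get1_le_maxVal v 1 (le_refl 1) (by omega); omega
  rw [i0, hset]
  simp
end I0

lemma ins_ne_nil (v : List ℕ) (c : ℕ) : ins v c ≠ [] := by
  simp [ins]

lemma maxVal_ins (v : List ℕ) (c : ℕ) :
    maxVal (ins v c) = max (if c = 0 then 0 else get1 v c + 1) (maxVal v) := by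
  rw [maxVal_perm (ins_perm v c), maxVal_cons]

lemma count_ins (v : List ℕ) (c x : ℕ) :
    (ins v c).count x = ((if c = 0 then 0 else get1 v c + 1) :: v).count x :=
  (ins_perm v c).count_eq x

lemma lastMax_eq_of {w : List ℕ} (hne : w ≠ []) {t : ℕ} (hmem : t ∈ Maxb w)
    (hmax : ∀ j ∈ Maxb w, j ≤ t) : lastMax w = t :=
  le_antisymm (hmax _ (lastMax_mem hne)) (le_lastMax hne hmem)

lemma card_shift (v : List ℕ) (c : ℕ) (hc : c ≤ v.length) (x t : ℕ) (ht : c ≤ t) :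
    ((Finset.Ioc (t + 1) (v.length + 1)).filter (fun i => get1 (ins v c) i = x)).card
      = ((Finset.Ioc t v.length).filter (fun i => get1 v i = x)).card := by
  refine Finset.card_bij' (fun i _ => i - 1) (fun j _ => j + 1) ?_ ?_ ?_ ?_
  · intro i hi
    simp only [Finset.mem_filter, Finset.mem_Ioc] at hi ⊢
    obtain ⟨⟨h1, h2⟩, h3⟩ := hi
    refine ⟨⟨by omega, by omega⟩, ?_⟩
    rw [← get1_ins_of_gt v c i hc (by omega) (by omega)]; exact h3
  · intro j hj
    simp only [Finset.mem_filter, Finset.mem_Ioc] at hj ⊢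
    obtain ⟨⟨h1, h2⟩, h3⟩ := hj
    refine ⟨⟨by omega, by omega⟩, ?_⟩
    rw [get1_ins_of_gt v c (j + 1) hc (by omega) (by omega)]
    simpa using h3
  · intro i hi
    simp only [Finset.mem_filter, Finset.mem_Ioc] at hi
    show i - 1 + 1 = i
    omega
  · intro j _
    show j + 1 - 1 = j
    omega

lemma mem_Maxb_iff {w : List ℕ} {i : ℕ} :
    i ∈ Maxb w ↔ (1 ≤ i ∧ i ≤ w.length) ∧ get1 w i = maxVal w := by
  simp [Maxb, Finset.mem_filter, Finset.mem_Icc]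

/-- Case A: insertion at a position of `Maxb`. -/
lemma lemA {v : List ℕ} (hv : IsAreaSeq v) (hne : v ≠ []) {c : ℕ} (hc : c ∈ Maxb v) :
    (Maxb (ins v c)).card = 1 ∧
    (Maxa (ins v c)).card = ((Maxb v).filter (fun x => c < x)).card := by
  set n := v.length with hn
  set m := maxVal v with hm
  obtain ⟨⟨hc1, hc2⟩, hcv⟩ := mem_Maxb_iff.mp hc
  have hc0 : c ≠ 0 := by omega
  have hL : (if c = 0 then 0 else get1 v c + 1) = m + 1 := by rw [if_neg hc0, hcv]
  have hmax : maxVal (ins v c) = m + 1 := by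
    rw [maxVal_ins, hL]; omega
  have hlen : (ins v c).length = n + 1 := length_ins v c hc2
  have hwne : ins v c ≠ [] := ins_ne_nil v c
  have hget : get1 (ins v c) (c + 1) = m + 1 := by
    rw [get1_ins_self v c hc2, hL]
  constructor
  · rw [Maxb_card_count, hmax, count_ins, hL, List.count_cons_self,
      count_maxVal_succ v (m + 1) (by omega)]
  · have hlm : lastMax (ins v c) = c + 1 := by
      apply lastMax_eq_of hwne
      · rw [mem_Maxb_iff, hmax, hlen]
        exact ⟨⟨by omega, by omega⟩, hget⟩
      · intro j hj
        rw [mem_Maxb_iff, hmax, hlen] at hj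
        obtain ⟨⟨hj1, hj2⟩, hjv⟩ := hj
        by_contra hcon
        rw [get1_ins_of_gt v c j hc2 (by omega) (by omega)] at hjv
        have := get1_le_maxVal v (j - 1) (by omega) (by omega)
        omega
    rw [Maxa_char hwne (by omega), hmax, hlm, hlen]
    have : m + 1 - 1 = m := by omega
    rw [this, card_shift v c hc2 m c le_rfl]
    congr 1
    ext i
    simp only [Finset.mem_filter, Finset.mem_Ioc, mem_Maxb_iff, ← hn, ← hm]
    omega

/-- Case B: insertion at a position of `Maxa`. -/
lemma lemB {v : List ℕ} (hv : IsAreaSeq v) (hne : v ≠ []) {c : ℕ} (hc : c ∈ Maxa v) :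
    (Maxb (ins v c)).card = (Maxb v).card + 1 ∧
    (Maxa (ins v c)).card = ((Maxa v).filter (fun x => c < x)).card := by
  set n := v.length with hn
  set m := maxVal v with hm
  have hm1 : 1 ≤ m := by
    have := (Finset.mem_filter.mp hc).2.1
    omega
  rw [Maxa_char hne hm1] at hc
  obtain ⟨hioc, hcv⟩ := Finset.mem_filter.mp hc
  rw [Finset.mem_Ioc] at hioc
  have hP := lastMax_bounds hne
  have hc1 : 1 ≤ c := by omega
  have hc2 : c ≤ n := hioc.2
  have hL : (if c = 0 then 0 else get1 v c + 1) = m := by rw [if_neg (by omega), hcv]; omega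
  have hmax : maxVal (ins v c) = m := by rw [maxVal_ins, hL]; omega
  have hlen : (ins v c).length = n + 1 := length_ins v c hc2
  have hwne : ins v c ≠ [] := ins_ne_nil v c
  have hget : get1 (ins v c) (c + 1) = m := by rw [get1_ins_self v c hc2, hL]
  constructor
  · rw [Maxb_card_count, hmax, count_ins, hL, List.count_cons_self, Maxb_card_count, ← hm]
  · have hlm : lastMax (ins v c) = c + 1 := by
      apply lastMax_eq_of hwne
      · rw [mem_Maxb_iff, hmax, hlen]
        exact ⟨⟨by omega, by omega⟩, hget⟩
      · intro j hj
        rw [mem_Maxb_iff, hmax, hlen] at hj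
        obtain ⟨⟨hj1, hj2⟩, hjv⟩ := hj
        by_contra hcon
        rw [get1_ins_of_gt v c j hc2 (by omega) (by omega)] at hjv
        exact get1_ne_of_gt_lastMax hne (by omega) (by omega) hjv
    rw [Maxa_char hwne (by omega), hmax, hlm, hlen,
      card_shift v c hc2 (m - 1) c le_rfl]
    congr 1
    ext i
    rw [Maxa_char hne hm1]
    simp only [Finset.mem_filter, Finset.mem_Ioc, ← hn, ← hm]
    omega

/-- Case C: insertion at position `i0 - 1`. -/
lemma lemC {v : List ℕ} (hv : IsAreaSeq v) (hne : v ≠ []) :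
    (Maxb (ins v (i0 v - 1))).card = (Maxb v).card + 1 ∧
    (Maxa (ins v (i0 v - 1))).card = (Maxa v).card := by
  set n := v.length with hn
  set m := maxVal v with hm
  rcases Nat.eq_zero_or_pos m with hm0 | hm1
  · -- m = 0 : i0 = 1, prepend 0
    have hi1 : i0 v = 1 := i0_eq_one hne hm0
    have hc : i0 v - 1 = 0 := by omega
    rw [hc]
    have h0 : 0 ≤ n := by omega
    have hL : (if (0:ℕ) = 0 then 0 else get1 v 0 + 1) = 0 := by simp
    have hmax : maxVal (ins v 0) = 0 := by rw [maxVal_ins, hL]; omega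
    have hwne : ins v 0 ≠ [] := ins_ne_nil v 0
    constructor
    · rw [Maxb_card_count, hmax, count_ins, Maxb_card_count, ← hm, hm0]
      simp
    · rw [Maxa_eq_empty hmax, Maxa_eq_empty (by rw [← hm]; exact hm0)]
  · obtain ⟨hi2, hin, hival, hiprev, hiP⟩ := i0_facts hv hne hm1
    set c := i0 v - 1 with hcdef
    set P := lastMax v with hPdef
    have hP := lastMax_bounds hne
    have hc1 : 1 ≤ c := by omega
    have hc2 : c ≤ n := by omega
    have hcv : get1 v c = m - 1 := hiprev
    have hL : (if c = 0 then 0 else get1 v c + 1) = m := by rw [if_neg (by omega), hcv]; omega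
    have hmax : maxVal (ins v c) = m := by rw [maxVal_ins, hL]; omega
    have hlen : (ins v c).length = n + 1 := length_ins v c hc2
    have hwne : ins v c ≠ [] := ins_ne_nil v c
    constructor
    · rw [Maxb_card_count, hmax, count_ins, hL, List.count_cons_self, Maxb_card_count, ← hm]
    · have hlm : lastMax (ins v c) = P + 1 := by
        apply lastMax_eq_of hwne
        · rw [mem_Maxb_iff, hmax, hlen]
          refine ⟨⟨by omega, by omega⟩, ?_⟩
          rw [get1_ins_of_gt v c (P + 1) hc2 (by omega) (by omega)]
          simpa using lastMax_get1 hne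
        · intro j hj
          rw [mem_Maxb_iff, hmax, hlen] at hj
          obtain ⟨⟨hj1, hj2⟩, hjv⟩ := hj
          by_contra hcon
          rw [get1_ins_of_gt v c j hc2 (by omega) (by omega)] at hjv
          exact get1_ne_of_gt_lastMax hne (by omega) (by omega) hjv
      rw [Maxa_char hwne (by omega), hmax, hlm, hlen,
        card_shift v c hc2 (m - 1) P (by omega)]
      rw [Maxa_char hne hm1]

lemma countP_sorted_lt {l : List ℕ} (h : l.Pairwise (· < ·)) {i : ℕ} (hi : i < l.length)
    {x : ℕ} (hx : l[i] = x) :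
    l.countP (fun y => decide (x < y)) = l.length - 1 - i := by
  have hsplit : l = l.take (i + 1) ++ l.drop (i + 1) := (List.take_append_drop _ _).symm
  have hplt := List.pairwise_iff_getElem.mp h
  conv_lhs => rw [hsplit]
  rw [List.countP_append]
  have h1 : (l.take (i + 1)).countP (fun y => decide (x < y)) = 0 := by
    rw [List.countP_eq_zero]
    intro a ha
    obtain ⟨j, hj, hget⟩ := List.mem_iff_getElem.mp ha
    have hptake : (l.take (i+1)).length = min (i+1) l.length := List.length_take
    have hjlen : j < l.length := by omega
    have hja : a = l[j] := by rw [← hget, List.getElem_take]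
    subst hja
    simp only [decide_eq_true_eq, not_lt]
    rcases Nat.lt_or_ge j i with hji | hji
    · have := hplt j i hjlen hi hji; omega
    · have : j = i := by omega
      subst this; omega
  have h2 : (l.drop (i + 1)).countP (fun y => decide (x < y)) = (l.drop (i+1)).length := by
    rw [List.countP_eq_length]
    intro a ha
    obtain ⟨j, hj, hget⟩ := List.mem_iff_getElem.mp ha
    have hjd : (l.drop (i+1)).length = l.length - (i+1) := List.length_drop
    have hja : a = l[i + 1 + j]'(by omega) := by rw [← hget, List.getElem_drop]
    rw [hja]
    simp only [decide_eq_true_eq]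
    have := hplt i (i+1+j) hi (by have : (l.drop (i+1)).length = l.length - (i+1) := List.length_drop; omega) (by omega)
    omega
  rw [h1, h2, List.length_drop]
  omega

lemma filter_card_eq_countP (s : Finset ℕ) (p : ℕ → Prop) [DecidablePred p] :
    (s.filter p).card = (s.sort (· ≤ ·)).countP (fun x => decide (p x)) := by
  have h1 : (s.filter p).card = Multiset.countP p s.val := by
    rw [Multiset.countP_eq_card_filter]; rfl
  rw [h1, ← Finset.sort_eq s (· ≤ ·), Multiset.coe_countP]

lemma desc_getD {s : Finset ℕ} {k : ℕ} (hk : k < s.card) :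
    ((s.sort (· ≤ ·)).reverse.getD k 0) ∈ s ∧
    (s.filter (fun x => ((s.sort (· ≤ ·)).reverse.getD k 0) < x)).card = k := by
  set l := s.sort (· ≤ ·) with hl
  have hlen : l.length = s.card := Finset.length_sort _
  have hkl : k < l.reverse.length := by rw [List.length_reverse]; omega
  have hgd : l.reverse.getD k 0 = l.reverse[k] := by
    rw [List.getD_eq_getElem?_getD, List.getElem?_eq_getElem hkl]; rfl
  have hrev : l.reverse[k] = l[l.length - 1 - k]'(by omega) := List.getElem_reverse _
  have hmem : l.reverse.getD k 0 ∈ s := by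
    rw [hgd, hrev]
    exact (Finset.mem_sort (· ≤ ·)).mp (List.getElem_mem _)
  refine ⟨hmem, ?_⟩
  have hkl' : k < l.length := by omega
  rw [filter_card_eq_countP]
  have key := countP_sorted_lt (Finset.sortedLT_sort s).pairwise (i := l.length - 1 - k)
    (by rw [Finset.length_sort]; omega) (x := l.reverse.getD k 0)
    ((hgd.trans hrev).symm)
  change List.countP (fun x => decide (l.reverse.getD k 0 < x)) l = k
  rw [key]
  have hd : (s.sort fun a b => a ≤ b).length = s.card := by rw [Finset.length_sort]
  omega

lemma admissible_getD_A {v : List ℕ} (hne : v ≠ []) {a : ℕ} (ha : a < (Maxb v).card) :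
    (admissible v).getD a 0 ∈ Maxb v ∧
    ((Maxb v).filter (fun x => (admissible v).getD a 0 < x)).card = a := by
  have h : (admissible v).getD a 0 = ((Maxb v).sort (· ≤ ·)).reverse.getD a 0 := by
    rw [admissible, if_neg hne, List.append_assoc,
      List.getD_append _ _ _ a (by rw [List.length_reverse, Finset.length_sort]; omega)]
  rw [h]
  exact desc_getD ha

lemma admissible_getD_B {v : List ℕ} (hne : v ≠ []) {a : ℕ} (hab : (Maxb v).card ≤ a)
    (ha : a < (Maxb v).card + (Maxa v).card) :
    (admissible v).getD a 0 ∈ Maxa v ∧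
    ((Maxa v).filter (fun x => (admissible v).getD a 0 < x)).card = a - (Maxb v).card := by
  have h : (admissible v).getD a 0
      = ((Maxa v).sort (· ≤ ·)).reverse.getD (a - (Maxb v).card) 0 := by
    rw [admissible, if_neg hne, List.append_assoc,
      List.getD_append_right _ _ _ a (by rw [List.length_reverse, Finset.length_sort]; omega),
      List.length_reverse, Finset.length_sort,
      List.getD_append _ _ _ _ (by rw [List.length_reverse, Finset.length_sort]; omega)]
  rw [h]
  exact desc_getD (by omega)

lemma admissible_getD_C {v : List ℕ} (hne : v ≠ []) {a : ℕ}
    (ha : a = (Maxb v).card + (Maxa v).card) :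
    (admissible v).getD a 0 = i0 v - 1 := by
  rw [admissible, if_neg hne, List.append_assoc,
    List.getD_append_right _ _ _ a (by rw [List.length_reverse, Finset.length_sort]; omega),
    List.length_reverse, Finset.length_sort,
    List.getD_append_right _ _ _ _ (by rw [List.length_reverse, Finset.length_sort]; omega),
    List.length_reverse, Finset.length_sort]
  have : a - (Maxb v).card - (Maxa v).card = 0 := by omega
  rw [this]
  rfl

lemma bseq_le (w : List ℕ) (i : ℕ) (hi : 1 ≤ i) : bseq w i ≤ get1 w i := by
  match i with
  | 1 => simp [bseq]
  | (k + 2) => rw [bseq]; split <;> omega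

lemma bseq_congr (w w' : List ℕ) (k : ℕ)
    (h : ∀ i, 2 ≤ i → i ≤ k → get1 w i = get1 w' i) : bseq w k = bseq w' k := by
  induction k with
  | zero => rfl
  | succ n ih =>
    match n, ih with
    | 0, _ => rfl
    | (m + 1), ih =>
      have ih' : bseq w (m + 1) = bseq w' (m + 1) :=
        ih (fun i h2 hi => h i h2 (by omega))
      rw [bseq, bseq, ih', h (m + 2) (by omega) le_rfl]

lemma IsAreaSeq_prefix {u : List ℕ} {a : ℕ} (h : IsAreaSeq (u ++ [a])) : IsAreaSeq u := by
  constructor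
  · intro hu
    have h1 := h.1 (by simp)
    rwa [get1_append u a 1 le_rfl (by
      have : 0 < u.length := List.length_pos_iff.mpr hu; omega)] at h1
  · intro i hi hilen
    have h2 := h.2 i hi (by simp; omega)
    rwa [get1_append u a (i + 1) (by omega) (by omega),
      get1_append u a i hi (by omega)] at h2

lemma IsAreaSeq_ins {v : List ℕ} (hv : IsAreaSeq v) {c : ℕ} (hc : c ≤ v.length) :
    IsAreaSeq (ins v c) := by
  have hlen := length_ins v c hc
  constructor
  · intro _
    by_cases hc0 : c = 0
    · subst hc0
      have := get1_ins_self v 0 (by omega)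
      simpa using this
    · rw [get1_ins_of_le v c 1 hc (le_refl 1) (by omega)]
      exact hv.1 (by intro h; rw [h] at hc; simp at hc; omega)
  · intro i hi hilen
    rw [hlen] at hilen
    rcases Nat.lt_or_ge (i + 1) (c + 1) with hlt | hge
    · -- i + 1 ≤ c
      rw [get1_ins_of_le v c (i + 1) hc (by omega) (by omega),
        get1_ins_of_le v c i hc hi (by omega)]
      exact hv.2 i hi (by omega)
    · rcases Nat.eq_or_lt_of_le hge with heq | hgt
      · -- i = c
        have hic : i = c := by omega
        subst hic
        rw [get1_ins_self v i hc, if_neg (by omega),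
          get1_ins_of_le v i i hc hi le_rfl]
      · rcases Nat.eq_or_lt_of_le hgt with heq2 | hgt2
        · -- i = c + 1
          have hic : i = c + 1 := by omega
          subst hic
          rw [get1_ins_of_gt v c (c + 2) hc (by omega) (by omega)]
          have e : c + 2 - 1 = c + 1 := by omega
          rw [e, get1_ins_self v c hc]
          by_cases hc0 : c = 0
          · subst hc0
            rw [if_pos rfl]
            have h1 : get1 v 1 = 0 := hv.1 (by intro h; rw [h] at hilen; simp at hilen)
            simpa using (by rw [h1]; omega : get1 v (0 + 1) ≤ 0 + 1)
          · rw [if_neg hc0]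
            have := hv.2 c (by omega) (by omega)
            omega
        · -- i ≥ c + 2
          rw [get1_ins_of_gt v c (i + 1) hc (by omega) (by omega),
            get1_ins_of_gt v c i hc (by omega) (by omega)]
          have := hv.2 (i - 1) (by omega) (by omega)
          have e : i - 1 + 1 = i := by omega
          rw [e] at this
          simpa using this

lemma psi_append (u : List ℕ) (a : ℕ) :
    psi (u ++ [a]) = ins (psi u) ((admissible (psi u)).getD a 0) := by
  rw [psi, List.reverse_append]
  rfl

lemma i0_pred_le {v : List ℕ} (hv : IsAreaSeq v) (hne : v ≠ []) : i0 v - 1 ≤ v.length := by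
  rcases Nat.eq_zero_or_pos (maxVal v) with hm | hm
  · rw [i0_eq_one hne hm]
    omega
  · have := (i0_facts hv hne hm).2.1
    omega

theorem key (w : List ℕ) : IsAreaSeq w → w ≠ [] →
    IsAreaSeq (psi w) ∧ (psi w).length = w.length ∧
    (Maxb (psi w)).card = bseq w w.length + 1 ∧
    (Maxa (psi w)).card = get1 w w.length - bseq w w.length := by
  induction w using List.reverseRecOn with
  | nil => intro _ h; exact absurd rfl h
  | append_singleton u a ih =>
    intro hw _
    by_cases hu : u = []
    · subst hu
      simp only [List.nil_append]
      have ha : a = 0 := by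
        have := hw.1 (by simp)
        simpa [get1] using this
      subst ha
      have hpsi : psi [0] = [0] := rfl
      rw [hpsi]
      refine ⟨⟨fun _ => rfl, ?_⟩, rfl, ?_, ?_⟩
      · intro i h1 h2; simp only [List.length_singleton] at h2; omega
      · decide
      · decide
    · obtain ⟨hva, hvlen, hvb, hvaa⟩ := ih (IsAreaSeq_prefix hw) hu
      have hn1 : 1 ≤ u.length := by
        have : 0 < u.length := List.length_pos_iff.mpr hu; omega
      rw [psi_append u a]
      set v := psi u with hvdef
      set n := u.length with hndef
      set b := bseq u n with hbdef
      set p := get1 u n with hpdef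
      have hvne : v ≠ [] := by
        intro h; rw [h] at hvlen; simp at hvlen; omega
      have hwlen : (u ++ [a]).length = n + 1 := by simp [hndef]
      have hglast : get1 (u ++ [a]) (n + 1) = a := get1_append_last u a
      have hbpref : bseq (u ++ [a]) n = b :=
        bseq_congr _ _ n (fun i h2 hi => get1_append u a i (by omega) hi)
      have hbw : bseq (u ++ [a]) (n + 1) = if b + 1 ≤ a then b + 1 else 0 := by
        have hrw : n + 1 = (n - 1) + 2 := by omega
        rw [hrw, bseq]
        have e1 : n - 1 + 1 = n := by omega
        have e2 : n - 1 + 2 = n + 1 := by omega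
        rw [e1, e2, hbpref, hglast]
      have hap : a ≤ p + 1 := by
        have h2 := hw.2 n hn1 (by rw [hwlen]; omega)
        rwa [hglast, get1_append u a n hn1 le_rfl, ← hpdef] at h2
      have hbp : b ≤ p := bseq_le u n hn1
      rw [hwlen, hglast, hbw]
      by_cases h1 : a ≤ b
      · -- Case A
        obtain ⟨hcmem, hcard⟩ := admissible_getD_A hvne (a := a) (by rw [hvb]; omega)
        set c := (admissible v).getD a 0 with hcdef
        have hc2 : c ≤ v.length := (mem_Maxb_iff.mp hcmem).1.2
        obtain ⟨hA1, hA2⟩ := lemA hva hvne hcmem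
        refine ⟨IsAreaSeq_ins hva hc2, ?_, ?_, ?_⟩
        · rw [length_ins v c hc2, hvlen]
        · rw [hA1, if_neg (by omega)]
        · rw [hA2, hcard, if_neg (by omega)]
          omega
      · by_cases h2 : a ≤ p
        · -- Case B
          obtain ⟨hcmem, hcard⟩ := admissible_getD_B hvne (a := a)
            (by rw [hvb]; omega) (by rw [hvb, hvaa]; omega)
          set c := (admissible v).getD a 0 with hcdef
          have hc2 : c ≤ v.length :=
            (Finset.mem_Icc.mp (Finset.mem_filter.mp hcmem).1).2
          obtain ⟨hB1, hB2⟩ := lemB hva hvne hcmem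
          refine ⟨IsAreaSeq_ins hva hc2, ?_, ?_, ?_⟩
          · rw [length_ins v c hc2, hvlen]
          · rw [hB1, hvb, if_pos (by omega)]
          · rw [hB2, hcard, hvb, if_pos (by omega)]
        · -- Case C
          have hape : a = p + 1 := by omega
          have hC := admissible_getD_C hvne (a := a)
            (by rw [hvb, hvaa]; omega)
          rw [hC]
          have hc2 : i0 v - 1 ≤ v.length := i0_pred_le hva hvne
          obtain ⟨hC1, hC2⟩ := lemC hva hvne
          refine ⟨IsAreaSeq_ins hva hc2, ?_, ?_, ?_⟩
          · rw [length_ins v _ hc2, hvlen]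
          · rw [hC1, hvb, if_pos (by omega)]
          · rw [hC2, hvaa, if_pos (by omega)]
            omega



/-- For a nonempty area sequence `w` of size `n` with bounce sequence
`b_1 … b_n`, the number of positions of `ψ w` carrying the maximal value is
`b_n + 1`. -/
theorem card_Maxb_psi (w : List ℕ) (hw : IsAreaSeq w) (hne : w ≠ []) :
    (Maxb (psi w)).card = bseq w w.length + 1 :=
  (key w hw hne).2.2.1
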